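/- (Lindström–Gessel–Viennot cancellation) Let $G$ be a locally finite directed acyclic graph, let $u_1, \dots, u_l$ and $v_1, \dots, v_l$ be vertices, and suppose the vertices are arranged so that any two paths $u_i \to v_{\pi(i)}$ and $u_j \to v_{\pi(j)}$ with $i < j$ and $\pi(i) > \pi(j)$ must intersect. Then the signed sum $\sum_{\pi \in S_l} \mathrm{sgn}(\pi) \sum_{\mathbf{p}} w(\mathbf{p})$ over all $l$-tuples of paths $u_i \to v_{\pi(i)}$, weighted multiplicatively by edge weights $w$ in a commutative ring, equals the sum of $w(\mathbf{p})$ over all pairwise vertex-disjoint tuples of paths with $\pi = \mathrm{id}$, provided all relevant sums are finite. -/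

import Mathlib

/-!
STATEMENT 5: The Lindström–Gessel–Viennot cancellation lemma.
-/

/-- A (directed) path in a digraph with adjacency relation `adj`, from `u`
to `v`, recorded as its list of visited vertices. -/
structure DiPath (V : Type*) (adj : V → V → Prop) (u v : V) where
  verts : List V
  verts_ne : verts ≠ []
  head_eq : verts.head? = some u
  last_eq : verts.getLast? = some v
  chain : verts.Chain' adj

/-- The weight of a path: the product of the weights of its edges. -/
def DiPath.weight {V : Type*} {R : Type*} [CommRing R] {adj : V → V → Prop}
    {u v : V} (w : V → V → R) (p : DiPath V adj u v) : R :=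
  ((p.verts.zip p.verts.tail).map fun q => w q.1 q.2).prod

/-- Two paths intersect if they share a vertex. -/
def DiPath.Intersects {V : Type*} {adj : V → V → Prop} {u v u' v' : V}
    (p : DiPath V adj u v) (q : DiPath V adj u' v') : Prop :=
  ∃ x, x ∈ p.verts ∧ x ∈ q.verts

namespace LGV

variable {V : Type*} {adj : V → V → Prop}

lemma chain_transGen {r : V → V → Prop} {a : V} {L : List V}
    (h : List.Chain r a L) {b : V} (hb : b ∈ L) : Relation.TransGen r a b := by
  induction L generalizing a with
  | nil => simp at hb
  | cons c L ih =>
    rcases List.chain_cons.1 h with ⟨hac, hL⟩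
    rcases List.mem_cons.1 hb with rfl | hb'
    · exact Relation.TransGen.single hac
    · exact Relation.TransGen.head hac (ih hL hb')

lemma chain'_nodup (hacyclic : ∀ x : V, ¬ Relation.TransGen adj x x) :
    ∀ {L : List V}, L.Chain' adj → L.Nodup := by
  intro L
  induction L with
  | nil => simp
  | cons a L ih =>
    intro h
    have h1 : List.Chain adj a L := h
    refine List.nodup_cons.2 ⟨fun ha => hacyclic a (chain_transGen h1 ha), ih h.tail⟩

/-- edge product of a list of vertices -/
def eprod {R : Type*} [CommRing R] (w : V → V → R) (L : List V) : R :=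
  ((L.zip L.tail).map fun q => w q.1 q.2).prod

lemma weight_eq_eprod {R : Type*} [CommRing R] (w : V → V → R) {u v : V}
    (p : DiPath V adj u v) : p.weight w = eprod w p.verts := rfl

@[simp] lemma eprod_singleton {R : Type*} [CommRing R] (w : V → V → R) (x : V) :
    eprod w [x] = 1 := rfl

lemma eprod_cons_cons {R : Type*} [CommRing R] (w : V → V → R) (a b : V) (L : List V) :
    eprod w (a :: b :: L) = w a b * eprod w (b :: L) := rfl

lemma eprod_split {R : Type*} [CommRing R] (w : V → V → R) (x : V) :
    ∀ (A : List V) (B : List V),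
      eprod w (A ++ x :: B) = eprod w (A ++ [x]) * eprod w (x :: B) := by
  intro A
  induction A with
  | nil => intro B; simp
  | cons a A ih =>
    intro B
    cases A with
    | nil => simp [eprod_cons_cons, eprod]
    | cons a' A' =>
      have h1 : a :: a' :: A' ++ x :: B = a :: (a' :: A' ++ x :: B) := rfl
      have h2 : a :: a' :: A' ++ [x] = a :: (a' :: A' ++ [x]) := rfl
      rw [h1, h2, show a' :: A' ++ x :: B = a' :: (A' ++ x :: B) from rfl,
        show a' :: A' ++ [x] = a' :: (A' ++ [x]) from rfl,
        eprod_cons_cons, eprod_cons_cons, ← show a' :: A' ++ x :: B = a' :: (A' ++ x :: B) from rfl,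
        ← show a' :: A' ++ [x] = a' :: (A' ++ [x]) from rfl, ih B, mul_assoc]

@[ext] lemma _root_.DiPath.ext {u v : V} {p q : DiPath V adj u v}
    (h : p.verts = q.verts) : p = q := by
  cases p; cases q; cases h; rfl

def _root_.DiPath.copy {u v u' v' : V} (p : DiPath V adj u v) (hu : u = u') (hv : v = v') :
    DiPath V adj u' v' :=
  ⟨p.verts, p.verts_ne, hu ▸ p.head_eq, hv ▸ p.last_eq, p.chain⟩

@[simp] lemma copy_verts {u v u' v' : V} (p : DiPath V adj u v) (hu : u = u') (hv : v = v') :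
    (p.copy hu hv).verts = p.verts := rfl

lemma copy_weight {R : Type*} [CommRing R] (w : V → V → R) {u v u' v' : V}
    (p : DiPath V adj u v) (hu : u = u') (hv : v = v') :
    (p.copy hu hv).weight w = p.weight w := rfl

/-- splice: follow `p` up to `x`, then follow `q` after `x`. -/
def splice {u v u' v' : V} (p : DiPath V adj u v) (q : DiPath V adj u' v')
    (A B C D : List V) (x : V) (hp : p.verts = A ++ x :: B) (hq : q.verts = C ++ x :: D) :
    DiPath V adj u v' where
  verts := A ++ x :: D
  verts_ne := by simp
  head_eq := by
    have h := p.head_eq; rw [hp] at h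
    cases A with
    | nil => simpa using h
    | cons a A' => simpa using h
  last_eq := by
    have h := q.last_eq
    rw [hq, List.getLast?_append_cons] at h
    rw [List.getLast?_append_cons]; exact h
  chain := by
    have hpc := p.chain; rw [hp, List.Chain', List.isChain_append] at hpc
    have hqc := q.chain; rw [hq, List.Chain', List.isChain_append] at hqc
    rw [List.Chain', List.isChain_append]
    refine ⟨hpc.1, hqc.2.1, ?_⟩
    intro y hy z hz
    simp only [List.head?_cons, Option.mem_some_iff] at hz
    subst hz
    exact hpc.2.2 y hy x (by simp)

@[simp] lemma splice_verts {u v u' v' : V} (p : DiPath V adj u v) (q : DiPath V adj u' v')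
    (A B C D : List V) (x : V) (hp : p.verts = A ++ x :: B) (hq : q.verts = C ++ x :: D) :
    (splice p q A B C D x hp hq).verts = A ++ x :: D := rfl

lemma splice_weight_mul {R : Type*} [CommRing R] (w : V → V → R) {u v u' v' : V}
    (p : DiPath V adj u v) (q : DiPath V adj u' v')
    (A B C D : List V) (x : V) (hp : p.verts = A ++ x :: B) (hq : q.verts = C ++ x :: D) :
    (splice p q A B C D x hp hq).weight w * (splice q p C D A B x hq hp).weight w
      = p.weight w * q.weight w := by
  simp only [weight_eq_eprod, splice_verts, hp, hq]
  rw [eprod_split w x A D, eprod_split w x C B, eprod_split w x A B, eprod_split w x C D]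
  ring

/-- splitting a list at the first element failing `pr`. -/
lemma takeWhile_dropWhile_split {α : Type*} (pr : α → Bool) (x : α) :
    ∀ (A : List α) (B : List α), (∀ y ∈ A, pr y = true) → pr x = false →
      (A ++ x :: B).takeWhile pr = A ∧ (A ++ x :: B).dropWhile pr = x :: B := by
  intro A
  induction A with
  | nil =>
    intro B _ hx
    simp [List.takeWhile_cons, List.dropWhile_cons, hx]
  | cons a A ih =>
    intro B hA hx
    have ha : pr a = true := hA a (by simp)
    have := ih B (fun y hy => hA y (by simp [hy])) hx
    simp [List.takeWhile_cons, List.dropWhile_cons, ha, this.1, this.2]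

lemma head?_dropWhile_false {α : Type*} (pr : α → Bool) :
    ∀ (L : List α) (y : α), (L.dropWhile pr).head? = some y → pr y = false := by
  intro L
  induction L with
  | nil => intro y h; simp at h
  | cons a L ih =>
    intro y h
    by_cases ha : pr a
    · rw [List.dropWhile_cons_of_pos ha] at h
      exact ih y h
    · rw [List.dropWhile_cons_of_neg ha] at h
      simp only [List.head?_cons, Option.some.injEq] at h
      subst h; simpa using ha

lemma head_dropWhile_false {α : Type*} (pr : α → Bool) (L : List α)
    (h : L.dropWhile pr ≠ []) : pr ((L.dropWhile pr).head h) = false :=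
  head?_dropWhile_false pr L _ (List.head?_eq_head h)

/-! Configuration machinery -/

attribute [local instance] Classical.propDecidable

variable {l : ℕ} {u v : Fin l → V}

abbrev Conf (adj : V → V → Prop) (u v : Fin l → V) : Type _ :=
  Σ π : Equiv.Perm (Fin l), ∀ i : Fin l, DiPath V adj (u i) (v (π i))

def Bad (c : Conf adj u v) : Prop :=
  ∃ i j : Fin l, i ≠ j ∧ (c.2 i).Intersects (c.2 j)

noncomputable def sOne (c : Conf adj u v) : Finset (Fin l) :=
  Finset.univ.filter fun i => ∃ j, i < j ∧ (c.2 i).Intersects (c.2 j)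

lemma sOne_nonempty {c : Conf adj u v} (hc : Bad c) : (sOne c).Nonempty := by
  obtain ⟨i, j, hij, x, hxi, hxj⟩ := hc
  rcases lt_or_gt_of_ne hij with h | h
  · exact ⟨i, Finset.mem_filter.2 ⟨Finset.mem_univ _, j, h, x, hxi, hxj⟩⟩
  · exact ⟨j, Finset.mem_filter.2 ⟨Finset.mem_univ _, i, h, x, hxj, hxi⟩⟩

noncomputable def iIdx (c : Conf adj u v) (hc : Bad c) : Fin l :=
  (sOne c).min' (sOne_nonempty hc)

lemma iIdx_mem (c : Conf adj u v) (hc : Bad c) : iIdx c hc ∈ sOne c :=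
  Finset.min'_mem _ _

lemma iIdx_le {c : Conf adj u v} (hc : Bad c) {k : Fin l} (hk : k ∈ sOne c) :
    iIdx c hc ≤ k := Finset.min'_le _ _ hk

def pred (c : Conf adj u v) (hc : Bad c) (y : V) : Prop :=
  ∃ j, iIdx c hc < j ∧ y ∈ (c.2 j).verts

noncomputable def rest1 (c : Conf adj u v) (hc : Bad c) : List V :=
  (c.2 (iIdx c hc)).verts.dropWhile fun y => decide (¬ pred c hc y)

noncomputable def Alist (c : Conf adj u v) (hc : Bad c) : List V :=
  (c.2 (iIdx c hc)).verts.takeWhile fun y => decide (¬ pred c hc y)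

lemma rest1_ne (c : Conf adj u v) (hc : Bad c) : rest1 c hc ≠ [] := by
  intro h
  rw [rest1, List.dropWhile_eq_nil_iff] at h
  obtain ⟨-, j, hj, x, hx1, hx2⟩ := Finset.mem_filter.1 (iIdx_mem c hc)
  have := h x hx1
  simp only [decide_eq_true_eq] at this
  exact this ⟨j, hj, hx2⟩

noncomputable def xV (c : Conf adj u v) (hc : Bad c) : V :=
  (rest1 c hc).head (rest1_ne c hc)

noncomputable def P2l (c : Conf adj u v) (hc : Bad c) : List V :=
  (rest1 c hc).tail

lemma verts_i_split (c : Conf adj u v) (hc : Bad c) :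
    (c.2 (iIdx c hc)).verts = Alist c hc ++ xV c hc :: P2l c hc := by
  rw [xV, P2l, List.cons_head_tail, Alist, rest1, List.takeWhile_append_dropWhile]

lemma pred_xV (c : Conf adj u v) (hc : Bad c) : pred c hc (xV c hc) := by
  exact not_not.1 (of_decide_eq_false (head_dropWhile_false
    (fun y => decide (¬ pred c hc y)) ((c.2 (iIdx c hc)).verts) (rest1_ne c hc)))

lemma not_pred_mem_Alist {c : Conf adj u v} (hc : Bad c) {y : V}
    (hy : y ∈ Alist c hc) : ¬ pred c hc y := by
  have := List.mem_takeWhile_imp hy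
  simpa using this

noncomputable def sTwo (c : Conf adj u v) (hc : Bad c) : Finset (Fin l) :=
  Finset.univ.filter fun j => iIdx c hc < j ∧ xV c hc ∈ (c.2 j).verts

lemma sTwo_nonempty (c : Conf adj u v) (hc : Bad c) : (sTwo c hc).Nonempty := by
  obtain ⟨j, hj, hx⟩ := pred_xV c hc
  exact ⟨j, Finset.mem_filter.2 ⟨Finset.mem_univ _, hj, hx⟩⟩

noncomputable def jIdx (c : Conf adj u v) (hc : Bad c) : Fin l :=
  (sTwo c hc).min' (sTwo_nonempty c hc)

lemma jIdx_mem (c : Conf adj u v) (hc : Bad c) : jIdx c hc ∈ sTwo c hc :=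
  Finset.min'_mem _ _

lemma jIdx_le {c : Conf adj u v} (hc : Bad c) {k : Fin l} (hk : k ∈ sTwo c hc) :
    jIdx c hc ≤ k := Finset.min'_le _ _ hk

lemma iIdx_lt_jIdx (c : Conf adj u v) (hc : Bad c) : iIdx c hc < jIdx c hc :=
  (Finset.mem_filter.1 (jIdx_mem c hc)).2.1

lemma xV_mem_j (c : Conf adj u v) (hc : Bad c) : xV c hc ∈ (c.2 (jIdx c hc)).verts :=
  (Finset.mem_filter.1 (jIdx_mem c hc)).2.2

noncomputable def rest2 (c : Conf adj u v) (hc : Bad c) : List V :=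
  (c.2 (jIdx c hc)).verts.dropWhile fun y => decide (y ≠ xV c hc)

noncomputable def Q1l (c : Conf adj u v) (hc : Bad c) : List V :=
  (c.2 (jIdx c hc)).verts.takeWhile fun y => decide (y ≠ xV c hc)

lemma rest2_ne (c : Conf adj u v) (hc : Bad c) : rest2 c hc ≠ [] := by
  intro h
  rw [rest2, List.dropWhile_eq_nil_iff] at h
  have := h _ (xV_mem_j c hc)
  simp at this

noncomputable def Q2l (c : Conf adj u v) (hc : Bad c) : List V :=
  (rest2 c hc).tail

lemma head_rest2 (c : Conf adj u v) (hc : Bad c) :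
    (rest2 c hc).head (rest2_ne c hc) = xV c hc := by
  exact not_not.1 (of_decide_eq_false (head_dropWhile_false
    (fun y => decide (y ≠ xV c hc)) ((c.2 (jIdx c hc)).verts) (rest2_ne c hc)))

lemma verts_j_split (c : Conf adj u v) (hc : Bad c) :
    (c.2 (jIdx c hc)).verts = Q1l c hc ++ xV c hc :: Q2l c hc := by
  rw [← head_rest2 c hc, Q2l, List.cons_head_tail, Q1l, rest2,
    List.takeWhile_append_dropWhile]

lemma ne_xV_mem_Q1l {c : Conf adj u v} (hc : Bad c) {y : V}
    (hy : y ∈ Q1l c hc) : y ≠ xV c hc := by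
  have := List.mem_takeWhile_imp hy
  simpa using this

noncomputable def next (c : Conf adj u v) (hc : Bad c) : Conf adj u v :=
  ⟨c.1 * Equiv.swap (iIdx c hc) (jIdx c hc), fun k =>
    if h1 : k = iIdx c hc then
      (splice (c.2 (iIdx c hc)) (c.2 (jIdx c hc)) (Alist c hc) (P2l c hc) (Q1l c hc)
        (Q2l c hc) (xV c hc) (verts_i_split c hc) (verts_j_split c hc)).copy
        (congrArg u h1.symm)
        (by rw [h1]; simp [Equiv.Perm.mul_apply, Equiv.swap_apply_left])
    else if h2 : k = jIdx c hc then
      (splice (c.2 (jIdx c hc)) (c.2 (iIdx c hc)) (Q1l c hc) (Q2l c hc) (Alist c hc)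
        (P2l c hc) (xV c hc) (verts_j_split c hc) (verts_i_split c hc)).copy
        (congrArg u h2.symm)
        (by rw [h2]; simp [Equiv.Perm.mul_apply, Equiv.swap_apply_right])
    else (c.2 k).copy rfl
        (by simp [Equiv.Perm.mul_apply, Equiv.swap_apply_of_ne_of_ne h1 h2])⟩

lemma next_fst (c : Conf adj u v) (hc : Bad c) :
    (next c hc).1 = c.1 * Equiv.swap (iIdx c hc) (jIdx c hc) := rfl

lemma next_verts_i (c : Conf adj u v) (hc : Bad c) :
    ((next c hc).2 (iIdx c hc)).verts = Alist c hc ++ xV c hc :: Q2l c hc := by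
  simp only [next]
  rw [dif_pos trivial]
  rfl

lemma next_verts_j (c : Conf adj u v) (hc : Bad c) :
    ((next c hc).2 (jIdx c hc)).verts = Q1l c hc ++ xV c hc :: P2l c hc := by
  simp only [next]
  rw [dif_neg (iIdx_lt_jIdx c hc).ne', dif_pos trivial]
  rfl

lemma next_verts_other (c : Conf adj u v) (hc : Bad c) {k : Fin l}
    (h1 : k ≠ iIdx c hc) (h2 : k ≠ jIdx c hc) :
    ((next c hc).2 k).verts = (c.2 k).verts := by
  simp only [next]
  rw [dif_neg h1, dif_neg h2]
  rfl

lemma next_bad (c : Conf adj u v) (hc : Bad c) : Bad (next c hc) :=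
  ⟨iIdx c hc, jIdx c hc, (iIdx_lt_jIdx c hc).ne, xV c hc,
    by rw [next_verts_i]; simp, by rw [next_verts_j]; simp⟩

lemma next_verts_subset (c : Conf adj u v) (hc : Bad c) (m : Fin l) {y : V}
    (hy : y ∈ ((next c hc).2 m).verts) :
    y ∈ (c.2 m).verts ∨ y ∈ (c.2 (iIdx c hc)).verts ∨ y ∈ (c.2 (jIdx c hc)).verts := by
  by_cases h1 : m = iIdx c hc
  · subst h1; rw [next_verts_i] at hy
    rcases List.mem_append.1 hy with h | h
    · left; rw [verts_i_split c hc]; exact List.mem_append.2 (Or.inl h)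
    · rcases List.mem_cons.1 h with rfl | h
      · right; right; exact xV_mem_j c hc
      · right; right; rw [verts_j_split c hc]; simp [h]
  · by_cases h2 : m = jIdx c hc
    · subst h2; rw [next_verts_j] at hy
      rcases List.mem_append.1 hy with h | h
      · left; rw [verts_j_split c hc]; exact List.mem_append.2 (Or.inl h)
      · rcases List.mem_cons.1 h with rfl | h
        · right; left; rw [verts_i_split c hc]; simp
        · right; left; rw [verts_i_split c hc]; simp [h]
    · left; rwa [next_verts_other c hc h1 h2] at hy

lemma iIdx_next (c : Conf adj u v) (hc : Bad c) :
    iIdx (next c hc) (next_bad c hc) = iIdx c hc := by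
  have hmem : iIdx c hc ∈ sOne (next c hc) := by
    refine Finset.mem_filter.2 ⟨Finset.mem_univ _, jIdx c hc, iIdx_lt_jIdx c hc, xV c hc,
      ?_, ?_⟩
    · rw [next_verts_i]; simp
    · rw [next_verts_j]; simp
  refine le_antisymm (Finset.min'_le _ _ hmem) (Finset.le_min' _ _ _ fun k hk => ?_)
  by_contra hlt
  push_neg at hlt
  obtain ⟨-, m, hm, y, hy1, hy2⟩ := Finset.mem_filter.1 hk
  have hk1 : k ≠ iIdx c hc := ne_of_lt hlt
  have hk2 : k ≠ jIdx c hc := ne_of_lt (hlt.trans (iIdx_lt_jIdx c hc))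
  rw [next_verts_other c hc hk1 hk2] at hy1
  have hks : k ∈ sOne c := by
    rcases next_verts_subset c hc m hy2 with h | h | h
    · exact Finset.mem_filter.2 ⟨Finset.mem_univ _, m, hm, y, hy1, h⟩
    · exact Finset.mem_filter.2 ⟨Finset.mem_univ _, iIdx c hc, hlt, y, hy1, h⟩
    · exact Finset.mem_filter.2
        ⟨Finset.mem_univ _, jIdx c hc, hlt.trans (iIdx_lt_jIdx c hc), y, hy1, h⟩
  exact absurd (iIdx_le hc hks) (not_le.2 hlt)

lemma not_pred_next_mem_Alist (c : Conf adj u v) (hc : Bad c)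
    (hnd : (c.2 (iIdx c hc)).verts.Nodup) {y : V} (hy : y ∈ Alist c hc) :
    ¬ pred (next c hc) (next_bad c hc) y := by
  rintro ⟨m, hm, hym⟩
  rw [iIdx_next] at hm
  have hnp : ¬ pred c hc y := not_pred_mem_Alist hc hy
  by_cases h2 : m = jIdx c hc
  · subst h2
    rw [next_verts_j] at hym
    rcases List.mem_append.1 hym with h | h
    · refine hnp ⟨jIdx c hc, iIdx_lt_jIdx c hc, ?_⟩
      rw [verts_j_split c hc]; exact List.mem_append.2 (Or.inl h)
    · rcases List.mem_cons.1 h with rfl | h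
      · exact hnp (pred_xV c hc)
      · rw [verts_i_split c hc, List.nodup_append] at hnd
        exact hnd.2.2 _ hy _ (List.mem_cons.2 (Or.inr h)) rfl
  · have h1 : m ≠ iIdx c hc := ne_of_gt hm
    rw [next_verts_other c hc h1 h2] at hym
    exact hnp ⟨m, hm, hym⟩

lemma pred_next_xV (c : Conf adj u v) (hc : Bad c) :
    pred (next c hc) (next_bad c hc) (xV c hc) := by
  refine ⟨jIdx c hc, ?_, ?_⟩
  · rw [iIdx_next]; exact iIdx_lt_jIdx c hc
  · rw [next_verts_j]; simp

lemma verts_next_i (c : Conf adj u v) (hc : Bad c) :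
    ((next c hc).2 (iIdx (next c hc) (next_bad c hc))).verts
      = Alist c hc ++ xV c hc :: Q2l c hc := by
  rw [iIdx_next, next_verts_i]

lemma Alist_next (c : Conf adj u v) (hc : Bad c)
    (hnd : (c.2 (iIdx c hc)).verts.Nodup) :
    Alist (next c hc) (next_bad c hc) = Alist c hc := by
  rw [Alist, verts_next_i]
  exact (takeWhile_dropWhile_split _ _ _ _
    (fun y hy => decide_eq_true (not_pred_next_mem_Alist c hc hnd hy))
    (decide_eq_false (not_not_intro (pred_next_xV c hc)))).1

lemma rest1_next (c : Conf adj u v) (hc : Bad c)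
    (hnd : (c.2 (iIdx c hc)).verts.Nodup) :
    rest1 (next c hc) (next_bad c hc) = xV c hc :: Q2l c hc := by
  rw [rest1, verts_next_i]
  exact (takeWhile_dropWhile_split _ _ _ _
    (fun y hy => decide_eq_true (not_pred_next_mem_Alist c hc hnd hy))
    (decide_eq_false (not_not_intro (pred_next_xV c hc)))).2

lemma xV_next (c : Conf adj u v) (hc : Bad c)
    (hnd : (c.2 (iIdx c hc)).verts.Nodup) :
    xV (next c hc) (next_bad c hc) = xV c hc := by
  have h1 : (rest1 (next c hc) (next_bad c hc)).head? = some (xV (next c hc) (next_bad c hc)) :=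
    List.head?_eq_head _
  have h2 : (rest1 (next c hc) (next_bad c hc)).head? = some (xV c hc) := by
    rw [rest1_next c hc hnd]; rfl
  exact Option.some.inj (h1.symm.trans h2)

lemma P2l_next (c : Conf adj u v) (hc : Bad c)
    (hnd : (c.2 (iIdx c hc)).verts.Nodup) :
    P2l (next c hc) (next_bad c hc) = Q2l c hc := by
  rw [P2l, rest1_next c hc hnd, List.tail_cons]

lemma jIdx_next (c : Conf adj u v) (hc : Bad c)
    (hnd : (c.2 (iIdx c hc)).verts.Nodup) :
    jIdx (next c hc) (next_bad c hc) = jIdx c hc := by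
  have hmem : jIdx c hc ∈ sTwo (next c hc) (next_bad c hc) := by
    refine Finset.mem_filter.2 ⟨Finset.mem_univ _, ?_, ?_⟩
    · rw [iIdx_next]; exact iIdx_lt_jIdx c hc
    · rw [xV_next c hc hnd, next_verts_j]; simp
  refine le_antisymm (Finset.min'_le _ _ hmem) (Finset.le_min' _ _ _ fun k hk => ?_)
  obtain ⟨-, hk1, hk2⟩ := Finset.mem_filter.1 hk
  rw [iIdx_next] at hk1
  rw [xV_next c hc hnd] at hk2
  by_cases h2 : k = jIdx c hc
  · exact le_of_eq h2.symm
  · have h1 : k ≠ iIdx c hc := ne_of_gt hk1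
    rw [next_verts_other c hc h1 h2] at hk2
    exact jIdx_le hc (Finset.mem_filter.2 ⟨Finset.mem_univ _, hk1, hk2⟩)

lemma verts_next_j (c : Conf adj u v) (hc : Bad c)
    (hnd : (c.2 (iIdx c hc)).verts.Nodup) :
    ((next c hc).2 (jIdx (next c hc) (next_bad c hc))).verts
      = Q1l c hc ++ xV c hc :: P2l c hc := by
  rw [jIdx_next c hc hnd, next_verts_j]

lemma Q1l_next (c : Conf adj u v) (hc : Bad c)
    (hnd : (c.2 (iIdx c hc)).verts.Nodup) :
    Q1l (next c hc) (next_bad c hc) = Q1l c hc := by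
  rw [Q1l, verts_next_j c hc hnd]
  refine (takeWhile_dropWhile_split _ _ _ _ (fun y hy => decide_eq_true ?_)
    (decide_eq_false ?_)).1
  · rw [xV_next c hc hnd]; exact ne_xV_mem_Q1l hc hy
  · rw [xV_next c hc hnd]; simp

lemma rest2_next (c : Conf adj u v) (hc : Bad c)
    (hnd : (c.2 (iIdx c hc)).verts.Nodup) :
    rest2 (next c hc) (next_bad c hc) = xV c hc :: P2l c hc := by
  rw [rest2, verts_next_j c hc hnd]
  refine (takeWhile_dropWhile_split _ _ _ _ (fun y hy => decide_eq_true ?_)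
    (decide_eq_false ?_)).2
  · rw [xV_next c hc hnd]; exact ne_xV_mem_Q1l hc hy
  · rw [xV_next c hc hnd]; simp

lemma Q2l_next (c : Conf adj u v) (hc : Bad c)
    (hnd : (c.2 (iIdx c hc)).verts.Nodup) :
    Q2l (next c hc) (next_bad c hc) = P2l c hc := by
  rw [Q2l, rest2_next c hc hnd, List.tail_cons]

lemma conf_ext {c d : Conf adj u v} (h1 : c.1 = d.1)
    (h2 : ∀ k, (c.2 k).verts = (d.2 k).verts) : c = d := by
  obtain ⟨π, p⟩ := c
  obtain ⟨π', p'⟩ := d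
  dsimp only at h1
  subst h1
  dsimp only at h2
  rw [show p = p' from funext fun k => DiPath.ext (h2 k)]

lemma next_next (hacyclic : ∀ x : V, ¬ Relation.TransGen adj x x)
    (c : Conf adj u v) (hc : Bad c) :
    next (next c hc) (next_bad c hc) = c := by
  have hnd : (c.2 (iIdx c hc)).verts.Nodup := chain'_nodup hacyclic (c.2 _).chain
  refine conf_ext ?_ ?_
  · rw [next_fst, next_fst, iIdx_next, jIdx_next c hc hnd, mul_assoc,
      Equiv.swap_mul_self, mul_one]
  · intro k
    by_cases h1 : k = iIdx c hc
    · subst h1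
      have h := verts_next_i (next c hc) (next_bad c hc)
      rw [iIdx_next, iIdx_next] at h
      rw [h, Alist_next c hc hnd, xV_next c hc hnd, Q2l_next c hc hnd,
        ← verts_i_split c hc]
    · by_cases h2 : k = jIdx c hc
      · subst h2
        have hnd' : ((next c hc).2 (iIdx (next c hc) (next_bad c hc))).verts.Nodup :=
          chain'_nodup hacyclic ((next c hc).2 _).chain
        have h := verts_next_j (next c hc) (next_bad c hc) hnd'
        rw [jIdx_next (next c hc) (next_bad c hc) hnd', jIdx_next c hc hnd] at h
        rw [h, Q1l_next c hc hnd, xV_next c hc hnd, P2l_next c hc hnd,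
          ← verts_j_split c hc]
      · have h1' : k ≠ iIdx (next c hc) (next_bad c hc) := by rw [iIdx_next]; exact h1
        have h2' : k ≠ jIdx (next c hc) (next_bad c hc) := by
          rw [jIdx_next c hc hnd]; exact h2
        rw [next_verts_other (next c hc) (next_bad c hc) h1' h2',
          next_verts_other c hc h1 h2]

noncomputable def F {R : Type*} [CommRing R] (w : V → V → R) (c : Conf adj u v) : R :=
  ((Equiv.Perm.sign c.1 : ℤˣ) : ℤ) • ∏ i, (c.2 i).weight w

lemma weight_prod_next {R : Type*} [CommRing R] (w : V → V → R)
    [hfin : ∀ a b : V, Fintype (DiPath V adj a b)]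
    (c : Conf adj u v) (hc : Bad c) :
    ∏ i, ((next c hc).2 i).weight w = ∏ i, (c.2 i).weight w := by
  classical
  have hij : jIdx c hc ≠ iIdx c hc := (iIdx_lt_jIdx c hc).ne'
  have hjmem : jIdx c hc ∈ Finset.univ.erase (iIdx c hc) :=
    Finset.mem_erase.2 ⟨hij, Finset.mem_univ _⟩
  rw [← Finset.mul_prod_erase Finset.univ _ (Finset.mem_univ (iIdx c hc)),
    ← Finset.mul_prod_erase _ _ hjmem,
    ← Finset.mul_prod_erase Finset.univ (fun i => (c.2 i).weight w)
      (Finset.mem_univ (iIdx c hc)),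
    ← Finset.mul_prod_erase _ (fun i => (c.2 i).weight w) hjmem]
  have hrest : ∏ k ∈ (Finset.univ.erase (iIdx c hc)).erase (jIdx c hc),
      ((next c hc).2 k).weight w
      = ∏ k ∈ (Finset.univ.erase (iIdx c hc)).erase (jIdx c hc), (c.2 k).weight w := by
    refine Finset.prod_congr rfl fun k hk => ?_
    have hk' := Finset.mem_erase.1 hk
    have hk'' := Finset.mem_erase.1 hk'.2
    rw [DiPath.weight, DiPath.weight, next_verts_other c hc hk''.1 hk'.1]
  rw [hrest, ← mul_assoc, ← mul_assoc]
  congr 1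
  simp only [weight_eq_eprod, next_verts_i, next_verts_j, verts_i_split c hc,
    verts_j_split c hc]
  rw [eprod_split w _ (Alist c hc) (Q2l c hc), eprod_split w _ (Q1l c hc) (P2l c hc),
    eprod_split w _ (Alist c hc) (P2l c hc), eprod_split w _ (Q1l c hc) (Q2l c hc)]
  ring

lemma F_next {R : Type*} [CommRing R] (w : V → V → R)
    [hfin : ∀ a b : V, Fintype (DiPath V adj a b)]
    (c : Conf adj u v) (hc : Bad c) :
    F w (next c hc) = - F w c := by
  have hs : Equiv.Perm.sign ((next c hc).1) = - Equiv.Perm.sign c.1 := by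
    rw [next_fst, map_mul, Equiv.Perm.sign_swap (iIdx_lt_jIdx c hc).ne, mul_neg_one]
  rw [F, F, hs, weight_prod_next w c hc]
  simp [Units.val_neg, neg_smul]

lemma next_ne (c : Conf adj u v) (hc : Bad c) : next c hc ≠ c := by
  intro h
  have h1 : c.1 * Equiv.swap (iIdx c hc) (jIdx c hc) = c.1 := by
    rw [← next_fst c hc, h]
  exact (iIdx_lt_jIdx c hc).ne (Equiv.mul_swap_eq_iff.1 h1)

lemma perm_apply_inv_self (π : Equiv.Perm (Fin l)) (x : Fin l) : π (π⁻¹ x) = x :=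
  π.apply_symm_apply x

lemma perm_ne_one_has_inversion (π : Equiv.Perm (Fin l)) (hπ : π ≠ 1) :
    ∃ i j : Fin l, i < j ∧ π j < π i := by
  by_contra h
  push_neg at h
  have hm : StrictMono π := fun a b hab =>
    lt_of_le_of_ne (h a b hab) (π.injective.ne hab.ne)
  have hne : (Finset.univ.filter fun k => π k ≠ k).Nonempty := by
    by_contra hne
    rw [Finset.not_nonempty_iff_eq_empty, Finset.filter_eq_empty_iff] at hne
    exact hπ (Equiv.ext fun k => not_not.1 (hne (Finset.mem_univ k)))
  set k0 := Finset.min' _ hne with hk0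
  have hk0mem := Finset.min'_mem _ hne
  have hk0ne : π k0 ≠ k0 := (Finset.mem_filter.1 hk0mem).2
  have hfix : ∀ m, m < k0 → π m = m := by
    intro m hm'
    by_contra hne'
    exact absurd (Finset.min'_le _ m (Finset.mem_filter.2 ⟨Finset.mem_univ _, hne'⟩))
      (not_le.2 hm')
  rcases lt_or_gt_of_ne hk0ne with hlt | hgt
  · exact hk0ne (π.injective (hfix _ hlt))
  · rcases lt_trichotomy (π⁻¹ k0) k0 with h2 | h2 | h2
    · have h3 := hfix _ h2
      rw [perm_apply_inv_self] at h3
      exact hk0ne ((congrArg π h3).trans (perm_apply_inv_self π k0))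
    · exact hk0ne (by rw [← h2, perm_apply_inv_self]; exact h2.symm)
    · have h3 := hm h2
      rw [perm_apply_inv_self] at h3
      exact absurd hgt (not_lt.2 h3.le)

end LGV

open Classical in
/-- Lindström–Gessel–Viennot: if the graph is acyclic and, for every
permutation `π` and every inversion `i < j`, `π i > π j`, any pair of paths
`u i → v (π i)`, `u j → v (π j)` must intersect, then the signed sum over all
tuples of paths equals the (positive) sum over vertex-disjoint tuples joining
`u i` to `v i`. -/
theorem lgv_lemma (V : Type*) (R : Type*) [CommRing R]
    (adj : V → V → Prop)
    (hacyclic : ∀ x : V, ¬ Relation.TransGen adj x x)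
    (w : V → V → R) (l : ℕ) (u v : Fin l → V)
    [hfin : ∀ a b : V, Fintype (DiPath V adj a b)]
    (hcross : ∀ (π : Equiv.Perm (Fin l)) (i j : Fin l), i < j → π j < π i →
      ∀ (p : DiPath V adj (u i) (v (π i))) (q : DiPath V adj (u j) (v (π j))),
        p.Intersects q) :
    (∑ π : Equiv.Perm (Fin l),
      ((Equiv.Perm.sign π : ℤˣ) : ℤ) •
        ∑ p : (∀ i : Fin l, DiPath V adj (u i) (v (π i))),
          ∏ i : Fin l, (p i).weight w) =
    ∑ p : (∀ i : Fin l, DiPath V adj (u i) (v i)),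
      if ∀ i j : Fin l, i ≠ j → ¬ (p i).Intersects (p j) then
        ∏ i : Fin l, (p i).weight w
      else 0 := by

  classical
  have hL : ∑ c : LGV.Conf adj u v, LGV.F w c
      = ∑ π : Equiv.Perm (Fin l),
          ((Equiv.Perm.sign π : ℤˣ) : ℤ) •
            ∑ p : (∀ i : Fin l, DiPath V adj (u i) (v (π i))),
              ∏ i : Fin l, (p i).weight w := by
    rw [show (Finset.univ : Finset (LGV.Conf adj u v))
        = Finset.univ.sigma fun _ => Finset.univ from rfl, Finset.sum_sigma]
    refine Finset.sum_congr rfl fun π _ => ?_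
    rw [Finset.smul_sum]
    rfl
  rw [← hL, ← Finset.sum_filter_add_sum_filter_not Finset.univ LGV.Bad (LGV.F w)]
  have hbad : (∑ c ∈ Finset.univ.filter (LGV.Bad : LGV.Conf adj u v → Prop), LGV.F w c) = 0 := by
    refine Finset.sum_involution
      (fun c hc => LGV.next c (Finset.mem_filter.1 hc).2) ?_ ?_ ?_ ?_
    · intro c hc
      rw [LGV.F_next w c (Finset.mem_filter.1 hc).2]
      simp
    · intro c hc _
      exact LGV.next_ne c _
    · intro c hc
      exact Finset.mem_filter.2 ⟨Finset.mem_univ _, LGV.next_bad c _⟩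
    · intro c hc
      exact LGV.next_next hacyclic c _
  rw [hbad, zero_add, Finset.sum_filter]
  rw [show (Finset.univ : Finset (LGV.Conf adj u v))
      = Finset.univ.sigma fun _ => Finset.univ from rfl, Finset.sum_sigma]
  rw [Finset.sum_eq_single (1 : Equiv.Perm (Fin l))]
  · show (∑ p : (∀ i : Fin l, DiPath V adj (u i) (v i)),
        if ¬ LGV.Bad (⟨1, p⟩ : LGV.Conf adj u v) then LGV.F w ⟨1, p⟩ else 0) = _
    refine Finset.sum_congr rfl fun p _ => ?_
    have hiff : (¬ LGV.Bad (⟨1, p⟩ : LGV.Conf adj u v))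
        ↔ ∀ i j : Fin l, i ≠ j → ¬ (p i).Intersects (p j) := by
      constructor
      · intro h i j hij hint
        exact h ⟨i, j, hij, hint⟩
      · rintro h ⟨i, j, hij, hint⟩
        exact h i j hij hint
    refine if_congr hiff ?_ rfl
    show ((Equiv.Perm.sign (1 : Equiv.Perm (Fin l)) : ℤˣ) : ℤ) • _ = _
    rw [Equiv.Perm.sign_one, Units.val_one, one_smul]; rfl
  · intro π _ hπ
    refine Finset.sum_eq_zero fun p _ => ?_
    obtain ⟨i, j, hij, hlt⟩ := LGV.perm_ne_one_has_inversion π hπ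
    rw [if_neg (not_not_intro ⟨i, j, hij.ne, hcross π i j hij hlt (p i) (p j)⟩)]
  · intro h
    exact absurd (Finset.mem_univ _) h
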